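/- Let $\mathcal{D}$ be a symmetric monoidal triangulated category and $f: A \to B$ a morphism of algebra objects in $\mathcal{D}$. If $M$ is a $B$-module object such that $A$ is a direct summand of the underlying $A$-module $f_* M$ (restriction of $M$ along $f$), then the map $A \to B$ splits in $\mathcal{D}$ (i.e., admits a retraction $B \to A$ with composite the identity on $A$). -/

import Mathlib

open CategoryTheory CategoryTheory.Limits CategoryTheory.Pretriangulated MonoidalCategory

/-- let `𝒟` be a symmetric monoidal triangulated category and `f : A ⟶ B` a
morphism of algebra (monoid) objects in `𝒟`.  If `M` is a `B`-module object such that `A`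
is a direct summand of `f_* M` (the restriction of `M` to an `A`-module along `f`) in the
category of `A`-modules, then `f : A ⟶ B` splits in `𝒟`, i.e. admits a retraction
`r : B ⟶ A` with `f ≫ r = 𝟙 A`. -/
theorem algebra_map_splits_of_summand_of_module
    {D : Type*} [Category D] [MonoidalCategory D] [SymmetricCategory D]
    [Preadditive D] [HasZeroObject D] [HasShift D ℤ]
    [∀ n : ℤ, (CategoryTheory.shiftFunctor D n).Additive] [Pretriangulated D]
    (A B : Mon D) (f : A ⟶ B) (M : Mod D B.X)
    (i : Mod.regular A.X ⟶ (Mod.comap f.hom).obj M)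
    (p : (Mod.comap f.hom).obj M ⟶ Mod.regular A.X)
    (hip : i ≫ p = 𝟙 (Mod.regular A.X)) :
    ∃ r : B.X ⟶ A.X, f.hom ≫ r = 𝟙 A.X := by
  obtain ⟨g, hg⟩ : ∃ g : A.X ⟶ M.X, g = i.hom := ⟨i.hom, rfl⟩
  obtain ⟨q, hq⟩ : ∃ q : M.X ⟶ A.X, q = p.hom := ⟨p.hom, rfl⟩
  refine ⟨(ρ_ B.X).inv ≫ (B.X ◁ (MonObj.one (X := A.X) ≫ g)) ≫ ModObj.smul (M := B.X) (X := M.X) ≫ q, ?_⟩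
  have hi : MonObj.mul (X := A.X) ≫ g
      = A.X ◁ g ≫ f.hom ▷ M.X ≫ ModObj.smul (M := B.X) (X := M.X) := by
    subst hg
    exact IsModHom.smul_hom (A := A.X) (f := i.hom)
  have hp : g ≫ q = 𝟙 A.X := by
    subst hg hq
    exact congrArg Mod.Hom.hom hip
  have key : f.hom ≫ (ρ_ B.X).inv ≫ (B.X ◁ (MonObj.one (X := A.X) ≫ g)) ≫ ModObj.smul (M := B.X) (X := M.X)
      = g := by
    have h1 : f.hom ≫ (ρ_ B.X).inv = (ρ_ A.X).inv ≫ (f.hom ▷ 𝟙_ D) :=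
      rightUnitor_inv_naturality f.hom
    rw [reassoc_of% h1, ← whisker_exchange_assoc]
    have : (A.X ◁ (MonObj.one (X := A.X) ≫ g)) ≫ (f.hom ▷ M.X) ≫ ModObj.smul (M := B.X) (X := M.X)
        = (A.X ◁ MonObj.one (X := A.X)) ≫ MonObj.mul (X := A.X) ≫ g := by
      rw [MonoidalCategory.whiskerLeft_comp, Category.assoc, ← hi]
    show (ρ_ A.X).inv ≫ A.X ◁ (MonObj.one (X := A.X) ≫ g) ≫ f.hom ▷ M.X ≫ ModObj.smul (M := B.X) (X := M.X) = g
    rw [this, MonObj.mul_one_assoc]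
    simp
  rw [reassoc_of% key, hp]
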